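/- Let X ∼ N(0, Σ) in ℝ^p with Σ_{−j,−j} invertible, and y = Xᵀβ + ε with ε ∼ N(0, σ²) independent of X. Let m̂(x) = xᵀβ̂ and m̂_{−j}(x^{−j}) = (x^{−j})ᵀβ̂' be fixed linear predictors, let β' := β_{−j} + β_j γ_{−j} with γ_{−j} = Σ_{−j,−j}^{−1} Σ_{−j,j}, and set Δβ := β − β̂, Δβ' := β' − β̂', Σ_cond^j := Σ_{j,j} − Σ_{j,−j} Σ_{−j,−j}^{−1} Σ_{−j,j}. Then the expected LOCO statistic is E[(y − m̂_{−j}(X^{−j}))²] − E[(y − m̂(X))²] = β_j² Σ_cond^j + Δβ'ᵀ Σ_{−j,−j} Δβ' − Δβᵀ Σ Δβ, i.e. it equals the Total Sobol Index ψ_TSI(j) = β_j² Σ_cond^j plus the difference of the two weighted estimation errors ‖Δβ'‖²_{Σ_{−j,−j}} − ‖Δβ‖²_Σ. -/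

import Mathlib

open MeasureTheory ProbabilityTheory

noncomputable section

/-- `X` is a Gaussian random vector with mean `μ` and covariance matrix `S`. -/
def IsGaussianVec {Ω : Type*} [MeasurableSpace Ω] (P : Measure Ω) {p : ℕ}
    (X : Ω → Fin p → ℝ) (μ : Fin p → ℝ) (S : Matrix (Fin p) (Fin p) ℝ) : Prop :=
  ∀ a : Fin p → ℝ,
    P.map (fun ω => ∑ i, a i * X ω i) =
      gaussianReal (∑ i, a i * μ i) (Real.toNNReal (∑ i, ∑ k, a i * S i k * a k))

namespace LocoAux

open Real

lemma integrable_sq_mul_exp {b : ℝ} (hb : 0 < b) :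
    Integrable (fun x : ℝ => x ^ 2 * Real.exp (-b * x ^ 2)) := by
  have h := integrable_rpow_mul_exp_neg_mul_sq hb (s := 2) (by norm_num)
  have : (fun x : ℝ => x ^ (2 : ℝ) * Real.exp (-b * x ^ 2))
      = fun x : ℝ => x ^ 2 * Real.exp (-b * x ^ 2) := by
    funext x
    rw [show (2 : ℝ) = ((2 : ℕ) : ℝ) by norm_num, Real.rpow_natCast]
  rwa [this] at h

lemma integral_sq_mul_exp {b : ℝ} (hb : 0 < b) :
    ∫ x : ℝ, x ^ 2 * Real.exp (-b * x ^ 2) = Real.sqrt (π / b) / (2 * b) := by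
  have hderiv : ∀ x : ℝ, HasDerivAt (fun x : ℝ => x * Real.exp (-b * x ^ 2))
      (Real.exp (-b * x ^ 2) - 2 * b * (x ^ 2 * Real.exp (-b * x ^ 2))) x := by
    intro x
    have h1 : HasDerivAt (fun x : ℝ => -b * x ^ 2) (-b * (2 * x)) x := by
      simpa using ((hasDerivAt_pow 2 x).const_mul (-b))
    have h3 : HasDerivAt (fun x : ℝ => x * Real.exp (-b * x ^ 2))
        (1 * Real.exp (-b * x ^ 2) + x * (Real.exp (-b * x ^ 2) * (-b * (2 * x)))) x :=
      (hasDerivAt_id x).mul h1.exp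
    convert h3 using 1
    ring
  have hInt' : Integrable (fun x : ℝ =>
      Real.exp (-b * x ^ 2) - 2 * b * (x ^ 2 * Real.exp (-b * x ^ 2))) :=
    (integrable_exp_neg_mul_sq hb).sub ((integrable_sq_mul_exp hb).const_mul (2 * b))
  have h0 := integral_eq_zero_of_hasDerivAt_of_integrable hderiv hInt'
    (integrable_mul_exp_neg_mul_sq hb)
  rw [integral_sub (integrable_exp_neg_mul_sq hb)
    ((integrable_sq_mul_exp hb).const_mul (2 * b)), MeasureTheory.integral_const_mul,
    integral_gaussian] at h0
  have h2b : (2 * b) ≠ 0 := by positivity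
  rw [eq_div_iff h2b]
  linarith

lemma gaussianPDFReal_zero_mean (w : NNReal) (x : ℝ) :
    gaussianPDFReal 0 w x
      = (Real.sqrt (2 * π * w))⁻¹ * Real.exp (-(2 * (w : ℝ))⁻¹ * x ^ 2) := by
  rw [gaussianPDFReal]
  norm_num
  left
  ring

lemma gaussianReal_zero_eq_withDensity (w : NNReal) (hw : w ≠ 0) :
    gaussianReal 0 w = volume.withDensity
      (fun x => ((Real.toNNReal (gaussianPDFReal 0 w x) : NNReal) : ENNReal)) := by
  rw [gaussianReal_of_var_ne_zero 0 hw]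
  rfl

lemma integral_gaussianReal_zero (w : NNReal) (hw : w ≠ 0) (g : ℝ → ℝ) :
    ∫ x, g x ∂(gaussianReal 0 w) = ∫ x, gaussianPDFReal 0 w x * g x := by
  rw [gaussianReal_zero_eq_withDensity w hw,
    integral_withDensity_eq_integral_smul ((measurable_gaussianPDFReal 0 w).real_toNNReal) g]
  congr 1
  funext x
  rw [NNReal.smul_def, Real.coe_toNNReal _ (gaussianPDFReal_nonneg 0 w x), smul_eq_mul]

lemma integrable_gaussianReal_zero_iff (w : NNReal) (hw : w ≠ 0) (g : ℝ → ℝ) :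
    Integrable g (gaussianReal 0 w)
      ↔ Integrable (fun x => gaussianPDFReal 0 w x * g x) := by
  rw [gaussianReal_zero_eq_withDensity w hw,
    integrable_withDensity_iff_integrable_smul ((measurable_gaussianPDFReal 0 w).real_toNNReal)]
  constructor <;> intro h <;> refine h.congr (Filter.Eventually.of_forall fun x => ?_) <;>
    simp only [NNReal.smul_def, Real.coe_toNNReal _ (gaussianPDFReal_nonneg 0 w x), smul_eq_mul]

lemma coe_pos_of_ne {w : NNReal} (hw : w ≠ 0) : (0 : ℝ) < w :=
  NNReal.coe_pos.2 (pos_iff_ne_zero.2 hw)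

lemma integrable_sq_gaussianReal (w : NNReal) :
    Integrable (fun x : ℝ => x ^ 2) (gaussianReal 0 w) := by
  by_cases hw : w = 0
  · subst hw
    rw [gaussianReal_zero_var]
    exact (integrable_const ((0:ℝ)^2)).congr
      ((ae_eq_dirac' (f := fun x : ℝ => x ^ 2) (by measurability))).symm
  · rw [integrable_gaussianReal_zero_iff w hw]
    have hb : (0:ℝ) < (2 * (w:ℝ))⁻¹ := by
      have := coe_pos_of_ne hw; positivity
    have h := (integrable_sq_mul_exp hb).const_mul (Real.sqrt (2 * π * w))⁻¹
    refine h.congr (Filter.Eventually.of_forall fun x => ?_)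
    simp only [gaussianPDFReal_zero_mean]
    ring

lemma integral_sq_gaussianReal (w : NNReal) :
    ∫ x, x ^ 2 ∂(gaussianReal 0 w) = w := by
  by_cases hw : w = 0
  · subst hw; simp [gaussianReal_zero_var, integral_dirac]
  · rw [integral_gaussianReal_zero w hw]
    have hwpos := coe_pos_of_ne hw
    have hb : (0:ℝ) < (2 * (w:ℝ))⁻¹ := by positivity
    have heq : (fun x : ℝ => gaussianPDFReal 0 w x * x ^ 2)
        = fun x => (Real.sqrt (2 * π * w))⁻¹ * (x ^ 2 * Real.exp (-(2 * (w:ℝ))⁻¹ * x ^ 2)) := by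
      funext x; rw [gaussianPDFReal_zero_mean]; ring
    rw [heq, MeasureTheory.integral_const_mul, integral_sq_mul_exp hb]
    have h1 : π / ((2 * (w:ℝ))⁻¹) = 2 * π * w := by
      field_simp
    rw [h1]
    have hs : (0:ℝ) < Real.sqrt (2 * π * w) := by
      apply Real.sqrt_pos.2; positivity
    rw [div_eq_mul_inv, ← mul_assoc, inv_mul_cancel₀ (ne_of_gt hs), one_mul]
    rw [mul_inv, inv_inv]
    field_simp

lemma integrable_id_gaussianReal (w : NNReal) :
    Integrable (fun x : ℝ => x) (gaussianReal 0 w) := by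
  by_cases hw : w = 0
  · subst hw
    rw [gaussianReal_zero_var]
    exact (integrable_const (0:ℝ)).congr
      ((ae_eq_dirac' (f := fun x : ℝ => x) measurable_id)).symm
  · rw [integrable_gaussianReal_zero_iff w hw]
    have hb : (0:ℝ) < (2 * (w:ℝ))⁻¹ := by
      have := coe_pos_of_ne hw; positivity
    have h := (integrable_mul_exp_neg_mul_sq hb).const_mul (Real.sqrt (2 * π * w))⁻¹
    refine h.congr (Filter.Eventually.of_forall fun x => ?_)
    simp only [gaussianPDFReal_zero_mean]
    ring

lemma integral_id_gaussianReal (w : NNReal) :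
    ∫ x, x ∂(gaussianReal 0 w) = 0 := by
  by_cases hw : w = 0
  · subst hw; simp [gaussianReal_zero_var, integral_dirac]
  · have hmap := gaussianReal_map_const_mul (μ := 0) (v := w) (-1)
    have hone : (NNReal.mk ((-1:ℝ)^2) (sq_nonneg _)) = 1 := by ext; norm_num
    rw [hone, one_mul, mul_zero] at hmap
    have hint : ∫ x, x ∂((gaussianReal 0 w).map (fun x => (-1) * x))
        = ∫ x, (-1) * x ∂(gaussianReal 0 w) :=
      integral_map (by fun_prop) aestronglyMeasurable_id
    rw [show (fun x : ℝ => (-1:ℝ) * x) = ((-1:ℝ) * ·) from rfl] at hint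
    rw [hmap] at hint
    rw [MeasureTheory.integral_const_mul] at hint
    linarith

lemma map_gaussian_moments {Ω : Type*} [MeasurableSpace Ω] {P : Measure Ω} {W : Ω → ℝ}
    (hW : Measurable W) {w : NNReal} (hlaw : P.map W = gaussianReal 0 w) :
    Integrable W P ∧ Integrable (fun ω => W ω ^ 2) P
      ∧ (∫ ω, W ω ∂P) = 0 ∧ (∫ ω, W ω ^ 2 ∂P) = w := by
  have hg1 : AEStronglyMeasurable (fun x : ℝ => x) (P.map W) :=
    aestronglyMeasurable_id
  have hg2 : AEStronglyMeasurable (fun x : ℝ => x ^ 2) (P.map W) :=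
    (measurable_id.pow_const 2).aestronglyMeasurable
  have h1 : Integrable W P := by
    have h := integrable_id_gaussianReal w
    rw [← hlaw] at h
    exact (integrable_map_measure hg1 hW.aemeasurable).1 h
  have h2 : Integrable (fun ω => W ω ^ 2) P := by
    have h := integrable_sq_gaussianReal w
    rw [← hlaw] at h
    exact (integrable_map_measure hg2 hW.aemeasurable).1 h
  refine ⟨h1, h2, ?_, ?_⟩
  · have := (integral_map hW.aemeasurable hg1).symm
    rw [hlaw, integral_id_gaussianReal] at this
    exact this.symm ▸ rfl
  · have := (integral_map hW.aemeasurable hg2).symm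
    rw [hlaw, integral_sq_gaussianReal] at this
    exact this.symm ▸ rfl

lemma sum_split {p : ℕ} (j : Fin p) (f : Fin p → ℝ) :
    ∑ i, f i = f j + ∑ i : {i : Fin p // i ≠ j}, f i.1 := by
  classical
  rw [← Finset.sum_subtype (Finset.univ.erase j) (fun x => by simp) f]
  exact (Finset.add_sum_erase _ f (Finset.mem_univ j)).symm

lemma quad_split {p : ℕ} (j : Fin p) (S : Matrix (Fin p) (Fin p) ℝ)
    (hsym : ∀ i k, S i k = S k i)
    (γ Δ : {i : Fin p // i ≠ j} → ℝ) (bj : ℝ)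
    (hkey : ∀ i : {i : Fin p // i ≠ j},
      (∑ k : {i : Fin p // i ≠ j}, S i.1 k.1 * γ k) = S i.1 j)
    (c : Fin p → ℝ) (hcj : c j = bj)
    (hcm : ∀ i : {i : Fin p // i ≠ j}, c i.1 = Δ i - bj * γ i) :
    ∑ i, ∑ k, c i * S i k * c k
      = bj ^ 2 * (S j j - ∑ i : {i : Fin p // i ≠ j}, γ i * S i.1 j)
        + ∑ i : {i : Fin p // i ≠ j}, ∑ k : {i : Fin p // i ≠ j},
            Δ i * S i.1 k.1 * Δ k := by
  classical
  set t : ℝ := ∑ i : {i : Fin p // i ≠ j}, γ i * S i.1 j with ht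
  set u : ℝ := ∑ i : {i : Fin p // i ≠ j}, Δ i * S i.1 j with hu
  set Q : ℝ := ∑ i : {i : Fin p // i ≠ j}, ∑ k : {i : Fin p // i ≠ j},
    Δ i * S i.1 k.1 * Δ k with hQ
  have hA : ∑ i : {i : Fin p // i ≠ j}, ∑ k : {i : Fin p // i ≠ j},
      Δ i * S i.1 k.1 * γ k = u := by
    rw [hu]
    refine Finset.sum_congr rfl fun i _ => ?_
    rw [← hkey i, Finset.mul_sum]
    exact Finset.sum_congr rfl fun k _ => by ring
  have hB : ∑ i : {i : Fin p // i ≠ j}, ∑ k : {i : Fin p // i ≠ j},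
      γ i * S i.1 k.1 * Δ k = u := by
    rw [Finset.sum_comm, hu]
    refine Finset.sum_congr rfl fun k _ => ?_
    rw [← hkey k, Finset.mul_sum]
    refine Finset.sum_congr rfl fun i _ => ?_
    rw [hsym i.1 k.1]; ring
  have hC : ∑ i : {i : Fin p // i ≠ j}, ∑ k : {i : Fin p // i ≠ j},
      γ i * S i.1 k.1 * γ k = t := by
    rw [ht]
    refine Finset.sum_congr rfl fun i _ => ?_
    rw [← hkey i, Finset.mul_sum]
    exact Finset.sum_congr rfl fun k _ => by ring
  rw [sum_split j (fun i => ∑ k, c i * S i k * c k)]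
  have hgj : ∑ k, c j * S j k * c k
      = bj ^ 2 * S j j + (bj * u - bj ^ 2 * t) := by
    rw [sum_split j (fun k => c j * S j k * c k), hcj]
    have : ∑ k : {i : Fin p // i ≠ j}, bj * S j k.1 * c k.1
        = ∑ k : {i : Fin p // i ≠ j},
            (bj * (Δ k * S k.1 j) - bj ^ 2 * (γ k * S k.1 j)) := by
      refine Finset.sum_congr rfl fun k _ => ?_
      rw [hcm k, hsym j k.1]; ring
    rw [this, Finset.sum_sub_distrib, ← Finset.mul_sum, ← Finset.mul_sum, ← hu, ← ht]
    ring
  have hgm : ∑ i : {i : Fin p // i ≠ j}, ∑ k, c i.1 * S i.1 k * c k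
      = (bj * u - bj ^ 2 * t) + (Q - bj * u - bj * u + bj ^ 2 * t) := by
    have hsplit : ∀ i : {i : Fin p // i ≠ j}, ∑ k, c i.1 * S i.1 k * c k
        = ((Δ i * S i.1 j) * bj - bj ^ 2 * (γ i * S i.1 j))
          + ∑ k : {i : Fin p // i ≠ j}, c i.1 * S i.1 k.1 * c k.1 := by
      intro i
      rw [sum_split j (fun k => c i.1 * S i.1 k * c k), hcj, hcm i]
      congr 1
      ring
    have h2 : ∑ i : {i : Fin p // i ≠ j}, ∑ k : {i : Fin p // i ≠ j},
        c i.1 * S i.1 k.1 * c k.1 = Q - bj * u - bj * u + bj ^ 2 * t := by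
      have : ∑ i : {i : Fin p // i ≠ j}, ∑ k : {i : Fin p // i ≠ j},
          c i.1 * S i.1 k.1 * c k.1
          = ∑ i : {i : Fin p // i ≠ j}, ∑ k : {i : Fin p // i ≠ j},
              (Δ i * S i.1 k.1 * Δ k - bj * (γ i * S i.1 k.1 * Δ k)
              - bj * (Δ i * S i.1 k.1 * γ k) + bj ^ 2 * (γ i * S i.1 k.1 * γ k)) := by
        refine Finset.sum_congr rfl fun i _ => Finset.sum_congr rfl fun k _ => ?_
        rw [hcm i, hcm k]; ring
      rw [this]
      simp only [Finset.sum_add_distrib, Finset.sum_sub_distrib, ← Finset.mul_sum]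
      rw [hA, hB, hC, ← hQ]
    calc ∑ i : {i : Fin p // i ≠ j}, ∑ k, c i.1 * S i.1 k * c k
        = ∑ i : {i : Fin p // i ≠ j}, (((Δ i * S i.1 j) * bj - bj ^ 2 * (γ i * S i.1 j))
            + ∑ k : {i : Fin p // i ≠ j}, c i.1 * S i.1 k.1 * c k.1) :=
          Finset.sum_congr rfl fun i _ => hsplit i
      _ = (bj * u - bj ^ 2 * t) + (Q - bj * u - bj * u + bj ^ 2 * t) := by
          rw [Finset.sum_add_distrib, Finset.sum_sub_distrib, h2]
          simp only [← Finset.mul_sum]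
          rw [show ∑ i : {i : Fin p // i ≠ j}, Δ i * S i.1 j * bj
              = (∑ i : {i : Fin p // i ≠ j}, Δ i * S i.1 j) * bj from
            (Finset.sum_mul _ _ _).symm, ← hu, ← ht]
          ring
  rw [hgj, hgm]
  ring

end LocoAux

open LocoAux

/-- expected LOCO in the Gaussian linear model: for `X ∼ N(0, S)`,
`y = Xᵀβ + ε` with `ε ∼ N(0, v)` independent of `X`, and fixed linear predictors `xᵀβ̂`,
`(x^{-j})ᵀβ̂'`, the expected LOCO statistic equals the Total Sobol Index `β_j² S_cond` plus
`‖Δβ'‖²_{S_{-j,-j}} - ‖Δβ‖²_S`, where `Δβ = β - β̂` and `Δβ' = β' - β̂'` with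
`β' = β_{-j} + β_j S_{-j,-j}⁻¹ S_{-j,j}`. -/
theorem loco_bias_gaussian_linear
    {Ω : Type*} [MeasurableSpace Ω] (P : Measure Ω) [IsProbabilityMeasure P]
    {p : ℕ} (j : Fin p) (X : Ω → Fin p → ℝ) (hX : Measurable X)
    (S : Matrix (Fin p) (Fin p) ℝ) (hS : S.PosSemidef)
    (hGauss : IsGaussianVec P X 0 S)
    (Smm : Matrix {i : Fin p // i ≠ j} {i : Fin p // i ≠ j} ℝ)
    (hSmm : Smm = Matrix.of fun i k => S i.1 k.1)
    (hinv : IsUnit Smm.det)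
    (β : Fin p → ℝ) (v : NNReal) (ε : Ω → ℝ) (hε : Measurable ε)
    (hεlaw : P.map ε = gaussianReal 0 v)
    (hεindep : IndepFun ε X P)
    (y : Ω → ℝ) (hy : ∀ ω, y ω = (∑ i, X ω i * β i) + ε ω)
    (γ : {i : Fin p // i ≠ j} → ℝ)
    (hγ : γ = fun i => ∑ k : {i : Fin p // i ≠ j}, Smm⁻¹ i k * S k.1 j)
    (Scond : ℝ)
    (hScond : Scond = S j j - ∑ i : {i : Fin p // i ≠ j}, ∑ k : {i : Fin p // i ≠ j},
        S j i.1 * Smm⁻¹ i k * S k.1 j)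
    (β' : {i : Fin p // i ≠ j} → ℝ) (hβ' : β' = fun i => β i.1 + β j * γ i)
    (βhat : Fin p → ℝ) (βhat' : {i : Fin p // i ≠ j} → ℝ)
    (Δβ : Fin p → ℝ) (hΔβ : Δβ = fun i => β i - βhat i)
    (Δβ' : {i : Fin p // i ≠ j} → ℝ) (hΔβ' : Δβ' = fun i => β' i - βhat' i) :
    (∫ ω, (y ω - ∑ i : {i : Fin p // i ≠ j}, X ω i.1 * βhat' i) ^ 2 ∂P)
      - (∫ ω, (y ω - ∑ i, X ω i * βhat i) ^ 2 ∂P)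
      = β j ^ 2 * Scond
        + (∑ i : {i : Fin p // i ≠ j}, ∑ k : {i : Fin p // i ≠ j},
            Δβ' i * S i.1 k.1 * Δβ' k)
        - ∑ i, ∑ k, Δβ i * S i k * Δβ k := by
  classical
  have hXi : ∀ i, Measurable fun ω => X ω i := fun i => (measurable_pi_apply i).comp hX
  -- the key second-moment computation
  have key : ∀ a : Fin p → ℝ,
      ∫ ω, (∑ i, a i * X ω i + ε ω) ^ 2 ∂P
        = (∑ i, ∑ k, a i * S i k * a k) + (v : ℝ) := by
    intro a
    set Z : Ω → ℝ := fun ω => ∑ i, a i * X ω i with hZ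
    set s : ℝ := ∑ i, ∑ k, a i * S i k * a k with hsdef
    have hs0 : 0 ≤ s := by
      have h := hS.dotProduct_mulVec_nonneg a
      have : dotProduct (star a) (S.mulVec a) = s := by
        simp only [hsdef, dotProduct, Matrix.mulVec, star_trivial,
          Finset.mul_sum, mul_assoc]
      rwa [this] at h
    have hZmeas : Measurable Z :=
      Finset.measurable_sum _ fun i _ => (hXi i).const_mul (a i)
    have hZlaw : P.map Z = gaussianReal 0 (Real.toNNReal s) := by
      have h := hGauss a
      simpa using h
    obtain ⟨hZ1, hZ2, hZm, hZv⟩ := map_gaussian_moments hZmeas hZlaw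
    obtain ⟨hε1, hε2, hεm, hεv⟩ := map_gaussian_moments hε hεlaw
    rw [Real.coe_toNNReal s hs0] at hZv
    have hφ : Measurable (fun x : Fin p → ℝ => ∑ i, a i * x i) :=
      Finset.measurable_sum _ fun i _ => (measurable_pi_apply i).const_mul _
    have hindep : IndepFun Z ε P :=
      (hεindep.comp measurable_id hφ).symm
    have hZεint : Integrable (fun ω => Z ω * ε ω) P :=
      hindep.integrable_mul hZ1 hε1
    have hZε : ∫ ω, Z ω * ε ω ∂P = 0 := by
      have h : ∫ ω, Z ω * ε ω ∂P = (∫ ω, Z ω ∂P) * ∫ ω, ε ω ∂P :=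
        hindep.integral_fun_mul_eq_mul_integral hZ1.aestronglyMeasurable hε1.aestronglyMeasurable
      rw [h, hZm, zero_mul]
    have hexpand : (fun ω => (Z ω + ε ω) ^ 2)
        = fun ω => Z ω ^ 2 + (2 * (Z ω * ε ω) + ε ω ^ 2) := by
      funext ω; ring
    calc ∫ ω, (Z ω + ε ω) ^ 2 ∂P
        = ∫ ω, (Z ω ^ 2 + (2 * (Z ω * ε ω) + ε ω ^ 2)) ∂P := by rw [hexpand]
      _ = (∫ ω, Z ω ^ 2 ∂P) + ((∫ ω, 2 * (Z ω * ε ω) ∂P) + ∫ ω, ε ω ^ 2 ∂P) := by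
          have hi1 : Integrable (fun ω => 2 * (Z ω * ε ω) + ε ω ^ 2) P :=
            (hZεint.const_mul 2).add hε2
          have hi2 : Integrable (fun ω => 2 * (Z ω * ε ω)) P := hZεint.const_mul 2
          rw [integral_add hZ2 hi1, integral_add hi2 hε2]
      _ = s + (v : ℝ) := by
          rw [MeasureTheory.integral_const_mul, hZε, hZv, hεv]
          ring
  -- symmetry of S
  have hsym : ∀ i k, S i k = S k i := by
    intro i k
    have h := congrFun (congrFun hS.1 k) i
    simpa [Matrix.conjTranspose_apply] using h
  -- the key inverse identity
  have hkey : ∀ i : {i : Fin p // i ≠ j},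
      (∑ k : {i : Fin p // i ≠ j}, S i.1 k.1 * γ k) = S i.1 j := by
    have hmul : Smm * Smm⁻¹ = 1 := Matrix.mul_nonsing_inv Smm hinv
    intro i
    calc ∑ k : {i : Fin p // i ≠ j}, S i.1 k.1 * γ k
        = ∑ k : {i : Fin p // i ≠ j}, ∑ l : {i : Fin p // i ≠ j},
            Smm i k * Smm⁻¹ k l * S l.1 j := by
          refine Finset.sum_congr rfl fun k _ => ?_
          rw [hγ, hSmm]
          simp only [Matrix.of_apply, Finset.mul_sum]
          exact Finset.sum_congr rfl fun l _ => by ring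
      _ = ∑ l : {i : Fin p // i ≠ j},
            (∑ k : {i : Fin p // i ≠ j}, Smm i k * Smm⁻¹ k l) * S l.1 j := by
          rw [Finset.sum_comm]
          exact Finset.sum_congr rfl fun l _ => (Finset.sum_mul _ _ _).symm
      _ = S i.1 j := by
          have : ∀ l : {i : Fin p // i ≠ j},
              (∑ k : {i : Fin p // i ≠ j}, Smm i k * Smm⁻¹ k l)
                = (1 : Matrix {i : Fin p // i ≠ j} {i : Fin p // i ≠ j} ℝ) i l := by
            intro l
            rw [← Matrix.mul_apply, hmul]
          simp only [this, Matrix.one_apply]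
          simp
  -- the restricted coefficient vector
  set c : Fin p → ℝ := fun i => if h : i = j then β j else β i - βhat' ⟨i, h⟩ with hc
  have hcj : c j = β j := dif_pos rfl
  have hcm : ∀ i : {i : Fin p // i ≠ j}, c i.1 = Δβ' i - β j * γ i := by
    intro i
    have h1 : c i.1 = β i.1 - βhat' i := by
      simp only [hc, dif_neg i.2]
    rw [h1, hΔβ', hβ']
    ring
  -- rewrite the two integrands
  have hfull : (fun ω => (y ω - ∑ i, X ω i * βhat i) ^ 2)
      = fun ω => (∑ i, Δβ i * X ω i + ε ω) ^ 2 := by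
    funext ω
    congr 1
    rw [hy ω, hΔβ]
    have : ∑ i, X ω i * β i - ∑ i, X ω i * βhat i
        = ∑ i, (β i - βhat i) * X ω i := by
      rw [← Finset.sum_sub_distrib]
      exact Finset.sum_congr rfl fun i _ => by ring
    linarith [this]
  have hrestr : (fun ω => (y ω - ∑ i : {i : Fin p // i ≠ j}, X ω i.1 * βhat' i) ^ 2)
      = fun ω => (∑ i, c i * X ω i + ε ω) ^ 2 := by
    funext ω
    congr 1
    have h2 : ∑ i, c i * X ω i
        = X ω j * β j + ∑ i : {i : Fin p // i ≠ j}, (β i.1 - βhat' i) * X ω i.1 := by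
      rw [sum_split j (fun i => c i * X ω i), hcj]
      congr 1
      · ring
      · refine Finset.sum_congr rfl fun i _ => ?_
        have h1 : c i.1 = β i.1 - βhat' i := by
          simp only [hc, dif_neg i.2]
        rw [h1]
    have h1 : ∑ i, X ω i * β i
        = X ω j * β j + ∑ i : {i : Fin p // i ≠ j}, X ω i.1 * β i.1 :=
      sum_split j (fun i => X ω i * β i)
    have h3 : ∑ i : {i : Fin p // i ≠ j}, (β i.1 - βhat' i) * X ω i.1
        = ∑ i : {i : Fin p // i ≠ j}, X ω i.1 * β i.1
          - ∑ i : {i : Fin p // i ≠ j}, X ω i.1 * βhat' i := by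
      rw [← Finset.sum_sub_distrib]
      exact Finset.sum_congr rfl fun i _ => by ring
    rw [hy ω]
    rw [h2, h3, h1]
    ring
  rw [hfull, hrestr, key c, key Δβ]
  -- the quadratic-form identity
  have hquad := quad_split j S hsym γ Δβ' (β j) hkey c hcj hcm
  have ht : ∑ i : {i : Fin p // i ≠ j}, γ i * S i.1 j
      = ∑ i : {i : Fin p // i ≠ j}, ∑ k : {i : Fin p // i ≠ j},
          S j i.1 * Smm⁻¹ i k * S k.1 j := by
    refine Finset.sum_congr rfl fun i _ => ?_
    rw [hγ]
    simp only
    rw [Finset.sum_mul]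
    refine Finset.sum_congr rfl fun k _ => ?_
    rw [hsym j i.1]
    ring
  rw [hquad, hScond, ht]
  ring
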